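/- arXiv:1301.4946 — 2 statements merged into one kernel-verified Lean document; each statement's English description precedes it below -/
import Mathlib

section
/- Let G be a looped simple graph with rank function r on M(IAS(G)). Let S ⊆ W(G) be a subtransversal of size |V(G)|−1 that contains exactly one element from each canonical cell except the cell of a vertex v (so (v,φ),(v,χ),(v,ψ) ∉ S). Then among the three sets S∪{(v,φ)}, S∪{(v,χ)}, S∪{(v,ψ)}, exactly one has rank r(S) in M(IAS(G)), and the other two have rank r(S)+1. -/
/-- The three column types of the matrix `IAS(G) = (I | A | I+A)`. -/
inductive GType : Type
  | phi | chi | psi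
  deriving DecidableEq

instance instFintypeGType : Fintype GType where
  elems := {GType.phi, GType.chi, GType.psi}
  complete := by intro x; cases x <;> simp

/-- The column of `IAS(G) = (I | A(G) | I+A(G))` indexed by a ground set element of
`W(G) = V × {φ, χ, ψ}`. -/
def iasCol {V : Type} [DecidableEq V] (A : Matrix V V (ZMod 2)) : V × GType → V → ZMod 2
  | (v, GType.phi) => fun w => if w = v then 1 else 0
  | (v, GType.chi) => fun w => A w v
  | (v, GType.psi) => fun w => (if w = v then 1 else 0) + A w v

/-- Independence in the binary matroid `M(IAS(G))`: a set of ground elements is independent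
iff the corresponding columns of `IAS(G)` are linearly independent over `GF(2)`. -/
def IasIndep {V : Type} [DecidableEq V] (A : Matrix V V (ZMod 2))
    (S : Set (V × GType)) : Prop :=
  LinearIndependent (ZMod 2) (fun p : S => iasCol A p.1)

/-- A circuit of `M(IAS(G))`: a minimal dependent set. -/
def IasCircuit {V : Type} [DecidableEq V] (A : Matrix V V (ZMod 2))
    (C : Set (V × GType)) : Prop :=
  ¬ IasIndep A C ∧ ∀ D : Set (V × GType), D ⊂ C → IasIndep A D

/-- The rank of a subset of the ground set of `M(IAS(G))`: the `GF(2)`-rank of the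
corresponding set of columns of `IAS(G)`. -/
noncomputable def iasRk {V : Type} [Fintype V] [DecidableEq V] (A : Matrix V V (ZMod 2))
    (S : Set (V × GType)) : ℕ :=
  Module.finrank (ZMod 2) (Submodule.span (ZMod 2) (iasCol A '' S))

namespace TriangleAux

open Matrix Finset Submodule

variable {V : Type} [Fintype V] [DecidableEq V]

/-- coefficient of `e_w` in a column of the given type -/
def ga : GType → ZMod 2
  | GType.phi => 1 | GType.chi => 0 | GType.psi => 1

/-- coefficient of `A_w` in a column of the given type -/
def gb : GType → ZMod 2
  | GType.phi => 0 | GType.chi => 1 | GType.psi => 1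

lemma iasCol_eq (A : Matrix V V (ZMod 2)) (w : V) (ι : GType) (u : V) :
    iasCol A (w, ι) u = ga ι * (if u = w then 1 else 0) + gb ι * A u w := by
  cases ι <;> simp [iasCol, ga, gb]

lemma dot_symm_mulVec (A : Matrix V V (ZMod 2)) (hA : A.IsSymm) (x y : V → ZMod 2) :
    x ⬝ᵥ A *ᵥ y = (A *ᵥ x) ⬝ᵥ y := by
  rw [Matrix.dotProduct_mulVec, ← Matrix.mulVec_transpose, hA.eq]

lemma dot_single (x : V → ZMod 2) (v : V) :
    x ⬝ᵥ (Pi.single v 1 : V → ZMod 2) = x v := by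
  simp [dotProduct, Pi.single_apply]

lemma colA_eq (A : Matrix V V (ZMod 2)) (v : V) :
    (fun u => A u v) = A *ᵥ (Pi.single v 1 : V → ZMod 2) := by
  funext u
  simp [Matrix.mulVec_single]

/-- double-orthocomplement: if `c` is orthogonal to everything orthogonal to `U`,
then `c ∈ U`. -/
lemma mem_of_forall_dot (U : Submodule (ZMod 2) (V → ZMod 2)) (c : V → ZMod 2)
    (h : ∀ x : V → ZMod 2, (∀ u ∈ U, x ⬝ᵥ u = 0) → x ⬝ᵥ c = 0) : c ∈ U := by
  by_contra hc
  have hq : U.mkQ c ≠ 0 := by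
    simpa [Submodule.mkQ_apply, Submodule.Quotient.mk_eq_zero] using hc
  have := (Module.forall_dual_apply_eq_zero_iff (ZMod 2) (U.mkQ c)).not.2 hq
  push_neg at this
  obtain ⟨g, hg⟩ := this
  set l : (V → ZMod 2) →ₗ[ZMod 2] ZMod 2 := g.comp U.mkQ with hl
  have hl0 : ∀ u ∈ U, l u = 0 := by
    intro u hu
    have : U.mkQ u = 0 := by
      simpa [Submodule.mkQ_apply, Submodule.Quotient.mk_eq_zero] using hu
    simp [hl, this]
  set x : V → ZMod 2 := fun u => l (Pi.single u 1) with hx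
  have hxy : ∀ y : V → ZMod 2, x ⬝ᵥ y = l y := by
    intro y
    have h1 : y = ∑ u, Pi.single u (y u) := by
      rw [Finset.univ_sum_single]
    conv_rhs => rw [h1]
    rw [map_sum]
    simp only [dotProduct]
    refine Finset.sum_congr rfl fun u _ => ?_
    have : Pi.single u (y u) = y u • (Pi.single u 1 : V → ZMod 2) := by
      funext j
      by_cases h : j = u <;> simp [Pi.single_apply, h]
    simp only [this, _root_.map_smul, smul_eq_mul, hx]
    ring
  have h1 : x ⬝ᵥ c = 0 := h x (fun u hu => by rw [hxy]; exact hl0 u hu)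
  rw [hxy] at h1
  exact hg h1

lemma finrank_span_insert_of_not_mem {T : Set (V → ZMod 2)} {c : V → ZMod 2}
    (hc : c ∉ Submodule.span (ZMod 2) T) :
    Module.finrank (ZMod 2) (Submodule.span (ZMod 2) (insert c T))
      = Module.finrank (ZMod 2) (Submodule.span (ZMod 2) T) + 1 := by
  have hc0 : c ≠ 0 := fun h => hc (h ▸ (Submodule.span (ZMod 2) T).zero_mem)
  have hlt : Submodule.span (ZMod 2) T < Submodule.span (ZMod 2) (insert c T) := by
    refine lt_of_le_of_ne (Submodule.span_mono (Set.subset_insert _ _)) ?_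
    intro h
    exact hc (h ▸ Submodule.subset_span (Set.mem_insert _ _))
  have h1 : Module.finrank (ZMod 2) (Submodule.span (ZMod 2) T)
      < Module.finrank (ZMod 2) (Submodule.span (ZMod 2) (insert c T)) :=
    Submodule.finrank_lt_finrank_of_lt hlt
  have h2 : Module.finrank (ZMod 2) (Submodule.span (ZMod 2) (insert c T))
      ≤ Module.finrank (ZMod 2) (Submodule.span (ZMod 2) T) + 1 := by
    rw [Submodule.span_insert]
    have := Submodule.finrank_sup_add_finrank_inf_eq
      ((ZMod 2) ∙ c) (Submodule.span (ZMod 2) T)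
    have hs : Module.finrank (ZMod 2) ((ZMod 2) ∙ c) = 1 := finrank_span_singleton hc0
    omega
  omega

lemma sum_coeff_eval (A : Matrix V V (ZMod 2)) (σ : V → GType) (c : V → ZMod 2) :
    (∑ w, c w • iasCol A (w, σ w))
      = (fun u => c u * ga (σ u)) + A *ᵥ (fun w => c w * gb (σ w)) := by
  funext u
  rw [Finset.sum_apply]
  simp only [Pi.add_apply, Pi.smul_apply, smul_eq_mul, iasCol_eq, Matrix.mulVec,
    dotProduct]
  rw [show (∑ w, c w * (ga (σ w) * (if u = w then 1 else 0) + gb (σ w) * A u w))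
      = ∑ w, ((if u = w then c w * ga (σ w) else 0) + A u w * (c w * gb (σ w))) from
    Finset.sum_congr rfl fun w _ => by by_cases h : u = w <;> simp [h] <;> ring]
  rw [Finset.sum_add_distrib, Finset.sum_ite_eq Finset.univ u (fun w => c w * ga (σ w))]
  simp

end TriangleAux

/-- triangle property: if `S` is a subtransversal of `W(G)` containing
exactly one element of each canonical cell except the cell of `v` (so `|S| = |V|−1`),
then exactly one of the three sets `S ∪ {(v,ι)}` has rank `r(S)` in `M(IAS(G))` and the
other two have rank `r(S) + 1`. -/
theorem triangle_property {V : Type} [Fintype V] [DecidableEq V]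
    (A : Matrix V V (ZMod 2)) (hA : A.IsSymm) (v : V) (S : Set (V × GType))
    (hvS : ∀ ι : GType, (v, ι) ∉ S)
    (hsub : ∀ w : V, w ≠ v → ∃! ι : GType, (w, ι) ∈ S) :
    ∃ ι : GType,
      iasRk A (insert (v, ι) S) = iasRk A S ∧
      ∀ κ : GType, κ ≠ ι → iasRk A (insert (v, κ) S) = iasRk A S + 1 := by
  classical
  open TriangleAux Matrix in
  -- the transversal function σ
  set σ : V → GType := fun w =>
    if h : w ≠ v then (hsub w h).choose else GType.phi with hσdef
  have hσmem : ∀ w, w ≠ v → (w, σ w) ∈ S := by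
    intro w hw
    simp only [hσdef, dif_pos hw]
    exact (hsub w hw).choose_spec.1
  have hσuniq : ∀ w ι, (w, ι) ∈ S → ι = σ w := by
    intro w ι hmem
    have hw : w ≠ v := by
      rintro rfl; exact hvS ι hmem
    simp only [hσdef, dif_pos hw]
    exact (hsub w hw).choose_spec.2 ι hmem
  have himg : iasCol A '' S = (fun w => iasCol A (w, σ w)) '' {w : V | w ≠ v} := by
    ext c
    constructor
    · rintro ⟨⟨w, ι⟩, hmem, rfl⟩
      have hw : w ≠ v := by rintro rfl; exact hvS ι hmem
      refine ⟨w, hw, ?_⟩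
      show iasCol A (w, σ w) = iasCol A (w, ι)
      rw [← hσuniq w ι hmem]
    · rintro ⟨w, hw, rfl⟩
      exact ⟨(w, σ w), hσmem w hw, rfl⟩
  set U : Submodule (ZMod 2) (V → ZMod 2) :=
    Submodule.span (ZMod 2) (iasCol A '' S) with hU
  -- abbreviations for the three candidate columns
  have hcφ : iasCol A (v, GType.phi) = (Pi.single v 1 : V → ZMod 2) := by
    funext u; simp [iasCol, Pi.single_apply]
  have hcψ : iasCol A (v, GType.psi)
      = iasCol A (v, GType.phi) + iasCol A (v, GType.chi) := by
    funext u; simp [iasCol]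
  -- membership extraction as coefficient functions
  have hcoeff : ∀ x : V → ZMod 2, x ∈ U →
      ∃ c : V → ZMod 2, c v = 0 ∧
        x = (fun u => c u * ga (σ u)) + A *ᵥ (fun w => c w * gb (σ w)) := by
    intro x hx
    rw [hU, himg, Finsupp.mem_span_image_iff_linearCombination] at hx
    obtain ⟨l, hl, hlx⟩ := hx
    refine ⟨fun w => l w, ?_, ?_⟩
    · simpa using (Finsupp.mem_supported' _ _).1 hl v (by simp)
    · rw [← sum_coeff_eval A σ (fun w => l w), ← hlx,
        Finsupp.linearCombination_apply, Finsupp.sum_fintype]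
      simp
  -- key fact (i): not both e_v and A_v are in U
  have keyI : ¬ (iasCol A (v, GType.phi) ∈ U ∧ iasCol A (v, GType.chi) ∈ U) := by
    rintro ⟨h1, h2⟩
    obtain ⟨c, hcv, hc⟩ := hcoeff _ h1
    obtain ⟨c', hcv', hc'⟩ := hcoeff _ h2
    set p : V → ZMod 2 := fun u => c u * ga (σ u) with hp
    set q : V → ZMod 2 := fun w => c w * gb (σ w) with hq
    set p' : V → ZMod 2 := fun u => c' u * ga (σ u) with hp'
    set q' : V → ZMod 2 := fun w => c' w * gb (σ w) with hq'
    have char2 : ∀ a b : ZMod 2, a + b = 0 ↔ a = b := by decide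
    have hpv : p v = 0 := by simp [hp, hcv]
    have hqv : q v = 0 := by simp [hq, hcv]
    have hq'v : q' v = 0 := by simp [hq', hcv']
    -- A *ᵥ q = single v 1 + p
    have e1 : A *ᵥ q = (Pi.single v 1 : V → ZMod 2) + p := by
      have := hcφ ▸ hc
      funext u
      have h := congrFun this u
      have : (Pi.single v 1 : V → ZMod 2) u = p u + (A *ᵥ q) u := h
      have h2 : ∀ a b s : ZMod 2, s = a + b → b = s + a := by decide
      simp only [Pi.add_apply]
      exact h2 _ _ _ this
    -- A *ᵥ q' = (col of A at v) + p'
    have e2 : A *ᵥ q' = (A *ᵥ (Pi.single v 1 : V → ZMod 2)) + p' := by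
      have hAv : iasCol A (v, GType.chi) = A *ᵥ (Pi.single v 1 : V → ZMod 2) := by
        funext u; simp [iasCol, Matrix.mulVec_single]
      have := hAv ▸ hc'
      funext u
      have h := congrFun this u
      have h2 : ∀ a b s : ZMod 2, s = a + b → b = s + a := by decide
      simp only [Pi.add_apply]
      exact h2 _ _ _ h
    -- compute q' ⬝ᵥ (A *ᵥ q)
    have s1 : q' ⬝ᵥ (A *ᵥ q) = q' ⬝ᵥ p := by
      rw [e1, dotProduct_add, TriangleAux.dot_single, hq'v, zero_add]
    -- compute q ⬝ᵥ (A *ᵥ q')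
    have s2 : q ⬝ᵥ (A *ᵥ q') = 1 + q ⬝ᵥ p' := by
      rw [e2, dotProduct_add]
      congr 1
      rw [TriangleAux.dot_symm_mulVec A hA, e1]
      simp [Pi.single_apply, hpv]
    have s3 : q' ⬝ᵥ (A *ᵥ q) = q ⬝ᵥ (A *ᵥ q') := by
      rw [TriangleAux.dot_symm_mulVec A hA, dotProduct_comm]
    have s4 : q' ⬝ᵥ p = q ⬝ᵥ p' := by
      simp only [dotProduct, hp, hq, hp', hq']
      exact Finset.sum_congr rfl fun w _ => by ring
    rw [s1, s2, ← s4] at s3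
    have : (1 : ZMod 2) = 0 := by
      have h2 : ∀ a : ZMod 2, a = 1 + a → (1:ZMod 2) = 0 := by decide
      exact h2 _ s3
    exact one_ne_zero this
  -- the symplectic identity for perp vectors
  have keyid : ∀ x y : V → ZMod 2,
      (∀ u ∈ U, x ⬝ᵥ u = 0) → (∀ u ∈ U, y ⬝ᵥ u = 0) →
      x v * (A *ᵥ y) v = y v * (A *ᵥ x) v := by
    intro x y hx hy
    have hperp : ∀ z : V → ZMod 2, (∀ u ∈ U, z ⬝ᵥ u = 0) → ∀ w, w ≠ v →
        ga (σ w) * z w + gb (σ w) * (A *ᵥ z) w = 0 := by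
      intro z hz w hw
      have hmem : iasCol A (w, σ w) ∈ U :=
        Submodule.subset_span ⟨(w, σ w), hσmem w hw, rfl⟩
      have hd := hz _ hmem
      rw [show z ⬝ᵥ iasCol A (w, σ w)
          = ga (σ w) * z w + gb (σ w) * (A *ᵥ z) w from ?_] at hd
      · exact hd
      · simp only [dotProduct, iasCol_eq]
        rw [show (∑ u, z u * (ga (σ w) * (if u = w then 1 else 0) + gb (σ w) * A u w))
            = ∑ u, ((if u = w then ga (σ w) * z u else 0) + gb (σ w) * (A w u * z u)) from
          Finset.sum_congr rfl fun u _ => by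
            have hAs : A u w = A w u := by
              have := congrFun (congrFun hA.eq u) w
              simpa [Matrix.transpose_apply] using this.symm
            by_cases h : u = w <;> simp [h, hAs] <;> ring]
        rw [Finset.sum_add_distrib, Finset.sum_ite_eq' Finset.univ w
          (fun u => ga (σ w) * z u)]
        simp [Matrix.mulVec, dotProduct, Finset.mul_sum]
    -- termwise vanishing away from v
    have hterm : ∀ w, w ≠ v →
        x w * (A *ᵥ y) w + y w * (A *ᵥ x) w = 0 := by
      intro w hw
      have hxw := hperp x hx w hw
      have hyw := hperp y hy w hw
      revert hxw hyw
      cases h : σ w <;> simp only [ga, gb] <;> intro hxw hyw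
      · -- phi : x w = 0, y w = 0
        simp only [one_mul, zero_mul, add_zero] at hxw hyw
        rw [hxw, hyw]; ring
      · -- chi : (A x) w = 0, (A y) w = 0
        simp only [zero_mul, one_mul, zero_add] at hxw hyw
        rw [hxw, hyw]; ring
      · -- psi : x w = (A x) w
        simp only [one_mul] at hxw hyw
        have char2 : ∀ a b : ZMod 2, a + b = 0 → a = b := by decide
        rw [char2 _ _ hxw, char2 _ _ hyw]
        have : ∀ a b : ZMod 2, a * b + b * a = 0 := by decide
        exact this _ _
    have htotal : (∑ w, (x w * (A *ᵥ y) w + y w * (A *ᵥ x) w)) = 0 := by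
      rw [Finset.sum_add_distrib]
      have h1 : (∑ w, x w * (A *ᵥ y) w) = x ⬝ᵥ (A *ᵥ y) := rfl
      have h2 : (∑ w, y w * (A *ᵥ x) w) = y ⬝ᵥ (A *ᵥ x) := rfl
      rw [h1, h2, TriangleAux.dot_symm_mulVec A hA y x, dotProduct_comm]
      have : ∀ a : ZMod 2, a + a = 0 := by decide
      exact this _
    have hv : x v * (A *ᵥ y) v + y v * (A *ᵥ x) v = 0 := by
      rw [← htotal]
      exact (Finset.sum_eq_single_of_mem v (Finset.mem_univ v)
        (fun w _ hw => hterm w hw)).symm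
    have char2 : ∀ a b : ZMod 2, a + b = 0 → a = b := by decide
    exact char2 _ _ hv
  -- key fact (ii): at least one of the three columns is in U
  have keyII : ∃ ι : GType, iasCol A (v, ι) ∈ U := by
    by_cases hall : ∀ x : V → ZMod 2, (∀ u ∈ U, x ⬝ᵥ u = 0) → x v = 0
    · refine ⟨GType.phi, TriangleAux.mem_of_forall_dot U _ fun x hx => ?_⟩
      rw [hcφ, TriangleAux.dot_single]
      exact hall x hx
    · push_neg at hall
      obtain ⟨x0, hx0, hx0v⟩ := hall
      have hx0v1 : x0 v = 1 := by
        have : ∀ a : ZMod 2, a ≠ 0 → a = 1 := by decide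
        exact this _ hx0v
      set γ : ZMod 2 := (A *ᵥ x0) v with hγ
      have hg : ∀ y : V → ZMod 2, (∀ u ∈ U, y ⬝ᵥ u = 0) → (A *ᵥ y) v = γ * y v := by
        intro y hy
        have := keyid x0 y hx0 hy
        rw [hx0v1, one_mul] at this
        rw [this, hγ]; ring
      have hdotA : ∀ y : V → ZMod 2, y ⬝ᵥ iasCol A (v, GType.chi) = (A *ᵥ y) v := by
        intro y
        have hAv : iasCol A (v, GType.chi) = A *ᵥ (Pi.single v 1 : V → ZMod 2) := by
          funext u; simp [iasCol, Matrix.mulVec_single]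
        rw [hAv, TriangleAux.dot_symm_mulVec A hA, TriangleAux.dot_single]
      by_cases hγ0 : γ = 0
      · refine ⟨GType.chi, TriangleAux.mem_of_forall_dot U _ fun y hy => ?_⟩
        rw [hdotA y, hg y hy, hγ0, zero_mul]
      · have hγ1 : γ = 1 := by
          have : ∀ a : ZMod 2, a ≠ 0 → a = 1 := by decide
          exact this _ hγ0
        refine ⟨GType.psi, TriangleAux.mem_of_forall_dot U _ fun y hy => ?_⟩
        rw [hcψ, dotProduct_add, hcφ, TriangleAux.dot_single, hdotA y,
          hg y hy, hγ1, one_mul]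
        have : ∀ a : ZMod 2, a + a = 0 := by decide
        exact this _
  -- exactly one: take the ι from keyII; others are not in U
  obtain ⟨ι, hι⟩ := keyII
  have hχ' : iasCol A (v, GType.chi)
      = iasCol A (v, GType.phi) + iasCol A (v, GType.psi) := by
    funext u
    simp only [iasCol, Pi.add_apply]
    exact (by decide : ∀ a b : ZMod 2, b = a + (a + b)) _ _
  have hφ' : iasCol A (v, GType.phi)
      = iasCol A (v, GType.chi) + iasCol A (v, GType.psi) := by
    funext u
    simp only [iasCol, Pi.add_apply]
    exact (by decide : ∀ a b : ZMod 2, a = b + (a + b)) _ _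
  have hnot : ∀ κ : GType, κ ≠ ι → iasCol A (v, κ) ∉ U := by
    intro κ hκ hmem
    apply keyI
    cases ι <;> cases κ
    · exact absurd rfl hκ
    · exact ⟨hι, hmem⟩
    · exact ⟨hι, by rw [hχ']; exact U.add_mem hι hmem⟩
    · exact ⟨hmem, hι⟩
    · exact absurd rfl hκ
    · exact ⟨by rw [hφ']; exact U.add_mem hι hmem, hι⟩
    · exact ⟨hmem, by rw [hχ']; exact U.add_mem hmem hι⟩
    · exact ⟨by rw [hφ']; exact U.add_mem hmem hι, hmem⟩
    · exact absurd rfl hκ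
  rw [hU] at hι
  refine ⟨ι, ?_, fun κ hκ => ?_⟩
  · unfold iasRk
    rw [Set.image_insert_eq, Submodule.span_insert_eq_span hι]
  · have hnm : iasCol A (v, κ) ∉ Submodule.span (ZMod 2) (iasCol A '' S) := by
      have := hnot κ hκ
      rwa [hU] at this
    unfold iasRk
    rw [Set.image_insert_eq]
    exact TriangleAux.finrank_span_insert_of_not_mem hnm
end

section
/- Let G be a looped simple graph. For each vertex v, there is exactly one transverse cycle ζ_v of G contained in {(v,χ),(v,ψ)} ∪ {(w,φ) : w ≠ v}; it satisfies: (w,φ) ∈ ζ_v iff w ∈ N(v), and (v,ψ) ∈ ζ_v iff v is looped (otherwise (v,χ) ∈ ζ_v). Consequently the set L(G) of transverse cycles determines the graph G. -/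
instance : Fintype GType :=
  ⟨{GType.phi, GType.chi, GType.psi}, by intro x; cases x <;> simp⟩

/-- A subtransversal of `W(G)` encoded as a function assigning to each vertex at most one
column type; `cycSum` is the sum of the corresponding columns of `IAS(G)`.
A transverse cycle is such an `f` with `cycSum A f = 0`. -/
def cycSum {V : Type} [Fintype V] [DecidableEq V] (A : Matrix V V (ZMod 2))
    (f : V → Option GType) : V → ZMod 2 :=
  ∑ v : V, (f v).elim 0 (fun ι => iasCol A (v, ι))

lemma zmod2_cases : ∀ a : ZMod 2, a = 0 ∨ a = 1 := by decide

lemma zmod2_one_add : ∀ a : ZMod 2, 1 + a = 0 → a = 1 := by decide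

lemma zmod2_ne_one : ∀ a : ZMod 2, a = 0 → a ≠ 1 := by decide

lemma zmod2_eq_of_iff : ∀ a b : ZMod 2, (a = 1 ↔ b = 1) → a = b := by decide

lemma cycSum_apply {V : Type} [Fintype V] [DecidableEq V] (A : Matrix V V (ZMod 2))
    (f : V → Option GType) (u : V) :
    cycSum A f u = ∑ w : V, ((f w).elim 0 fun ι => iasCol A (w, ι)) u := by
  simp [cycSum]

lemma key {V : Type} [Fintype V] [DecidableEq V] (A : Matrix V V (ZMod 2))
    (v : V) (f : V → Option GType) (h0 : cycSum A f = 0) (hv : f v ≠ none)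
    (hw : ∀ w, w ≠ v → f w = none ∨ f w = some GType.phi) :
    (∀ w, w ≠ v → (f w = some GType.phi ↔ A w v = 1)) ∧
      (f v = some GType.psi ↔ A v v = 1) ∧ (f v = some GType.chi ↔ A v v = 0) := by
  set t : V → V → ZMod 2 := fun w u => ((f w).elim 0 fun ι => iasCol A (w, ι)) u with ht
  have hzero : ∀ w u, w ≠ v → w ≠ u → t w u = 0 := by
    intro w u hwv hwu
    rcases hw w hwv with h | h <;> simp [ht, h, iasCol, Ne.symm hwu]
  have hsum : ∀ u, (∑ w : V, t w u) = 0 := by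
    intro u
    have := congrFun h0 u
    rwa [cycSum_apply] at this
  have hvv : t v v = 0 := by
    have := hsum v
    rwa [Finset.sum_eq_single v (fun w _ hw' => hzero w v hw' hw') (by simp)] at this
  have hfvphi : f v ≠ some GType.phi := by
    intro h
    rw [ht] at hvv
    simp [h, iasCol] at hvv
  have hpair : ∀ u, u ≠ v → t u u + t v u = 0 := by
    intro u huv
    have h := hsum u
    rw [← Finset.sum_subset (Finset.subset_univ {u, v})] at h
    · rwa [Finset.sum_pair huv] at h
    · intro w _ hwmem
      simp only [Finset.mem_insert, Finset.mem_singleton, not_or] at hwmem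
      exact hzero w u hwmem.2 hwmem.1
  have htuu : ∀ u, u ≠ v → t u u = (if f u = some GType.phi then 1 else 0) := by
    intro u huv
    rcases hw u huv with h | h <;> simp [ht, h, iasCol]
  have htvu : ∀ u, u ≠ v → t v u = A u v := by
    intro u huv
    rcases Option.eq_none_or_eq_some (f v) with h | ⟨ι, h⟩
    · exact absurd h hv
    · cases ι
      · exact absurd h hfvphi
      · simp [ht, h, iasCol]
      · simp [ht, h, iasCol, huv]
  have hphi : ∀ w, w ≠ v → (f w = some GType.phi ↔ A w v = 1) := by
    intro w hwv
    have h := hpair w hwv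
    rw [htuu w hwv, htvu w hwv] at h
    by_cases hfw : f w = some GType.phi
    · simp only [hfw, if_pos rfl] at h
      exact ⟨fun _ => zmod2_one_add _ h, fun _ => hfw⟩
    · simp only [hfw, if_false, zero_add] at h
      exact ⟨fun h' => absurd h' hfw, fun h' => absurd h' (zmod2_ne_one _ h)⟩
  refine ⟨hphi, ?_, ?_⟩ <;>
  · rcases Option.eq_none_or_eq_some (f v) with h | ⟨ι, h⟩
    · exact absurd h hv
    · cases ι
      · exact absurd h hfvphi
      · have : A v v = 0 := by rw [ht] at hvv; simpa [h, iasCol] using hvv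
        simp [h, this]
      · have : A v v = 1 := by
          rw [ht] at hvv
          simp only [h, Option.elim, iasCol, if_pos rfl] at hvv
          exact zmod2_one_add _ hvv
        simp [h, this]
        try decide

/-- The canonical transverse cycle `ζ_v`. -/
def zeta {V : Type} [DecidableEq V] (A : Matrix V V (ZMod 2)) (v : V) : V → Option GType :=
  fun w => if w = v then (if A v v = 1 then some GType.psi else some GType.chi)
    else (if A w v = 1 then some GType.phi else none)

lemma zeta_cycle {V : Type} [Fintype V] [DecidableEq V] (A : Matrix V V (ZMod 2)) (v : V) :
    cycSum A (zeta A v) = 0 := by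
  funext u
  rw [cycSum_apply]
  set t : V → ZMod 2 := fun w => ((zeta A v w).elim 0 fun ι => iasCol A (w, ι)) u with ht
  show (∑ w : V, t w) = 0
  have hzero : ∀ w, w ≠ v → w ≠ u → t w = 0 := by
    intro w hwv hwu
    by_cases h : A w v = 1 <;> simp [ht, zeta, hwv, h, iasCol, Ne.symm hwu]
  by_cases huv : u = v
  · subst huv
    rw [Finset.sum_eq_single u (fun w _ hw' => hzero w hw' hw') (by simp)]
    rcases zmod2_cases (A u u) with h | h
    · simp [ht, zeta, h, iasCol, zmod2_ne_one _ h]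
    · simp only [ht, zeta, if_pos rfl, h, if_pos, Option.elim, iasCol]
      decide
  · rw [← Finset.sum_subset (Finset.subset_univ {u, v})
      (fun w _ hwmem => by
        simp only [Finset.mem_insert, Finset.mem_singleton, not_or] at hwmem
        exact hzero w hwmem.2 hwmem.1),
      Finset.sum_pair huv]
    have h1 : t u = (if A u v = 1 then 1 else 0) := by
      by_cases h : A u v = 1 <;> simp [ht, zeta, huv, h, iasCol]
    have h2 : t v = A u v := by
      rcases zmod2_cases (A v v) with h | h
      · simp [ht, zeta, h, iasCol, huv, zmod2_ne_one _ h]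
      · simp [ht, zeta, h, iasCol, huv]
    rw [h1, h2]
    rcases zmod2_cases (A u v) with h | h <;> simp [h] <;> decide

/-- for each vertex `v` there is exactly one (nonempty at `v`) transverse
cycle `ζ_v` contained in `{(v,χ),(v,ψ)} ∪ {(w,φ) : w ≠ v}`; it satisfies
`(w,φ) ∈ ζ_v ↔ w ∈ N(v)` and `(v,ψ) ∈ ζ_v ↔ v` is looped (otherwise `(v,χ) ∈ ζ_v`).
Consequently the set of transverse cycles determines the graph `G`. -/
theorem transverse_cycle_determines_graph {V : Type} [Fintype V] [DecidableEq V]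
    (A : Matrix V V (ZMod 2)) (hA : A.IsSymm) :
    (∀ v : V,
      ∃! f : V → Option GType,
        cycSum A f = 0 ∧ f v ≠ none ∧
          (∀ w, w ≠ v → (f w = none ∨ f w = some GType.phi))) ∧
    (∀ (v : V) (f : V → Option GType),
      cycSum A f = 0 → f v ≠ none →
        (∀ w, w ≠ v → (f w = none ∨ f w = some GType.phi)) →
        ((∀ w, w ≠ v → (f w = some GType.phi ↔ A w v = 1)) ∧
          (f v = some GType.psi ↔ A v v = 1) ∧
          (f v = some GType.chi ↔ A v v = 0))) ∧
    (∀ B : Matrix V V (ZMod 2), B.IsSymm →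
      {f : V → Option GType | cycSum A f = 0} =
        {f : V → Option GType | cycSum B f = 0} →
      A = B) := by
  have hex : ∀ v : V, cycSum A (zeta A v) = 0 ∧ zeta A v v ≠ none ∧
      (∀ w, w ≠ v → zeta A v w = none ∨ zeta A v w = some GType.phi) := by
    intro v
    refine ⟨zeta_cycle A v, ?_, ?_⟩
    · by_cases h : A v v = 1 <;> simp [zeta, h]
    · intro w hwv
      by_cases h : A w v = 1 <;> simp [zeta, hwv, h]
  have huniq : ∀ (v : V) (f : V → Option GType), cycSum A f = 0 → f v ≠ none →
      (∀ w, w ≠ v → f w = none ∨ f w = some GType.phi) → f = zeta A v := by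
    intro v f h0 hv hw
    obtain ⟨hphi, hpsi, hchi⟩ := key A v f h0 hv hw
    funext w
    by_cases hwv : w = v
    · subst hwv
      rcases zmod2_cases (A w w) with h | h
      · rw [hchi.mpr h]; simp [zeta, zmod2_ne_one _ h]
      · rw [hpsi.mpr h]; simp [zeta, h]
    · by_cases h : A w v = 1
      · rw [(hphi w hwv).mpr h]; simp [zeta, hwv, h]
      · rcases hw w hwv with h' | h'
        · rw [h']; simp [zeta, hwv, h]
        · exact absurd ((hphi w hwv).mp h') h
  refine ⟨fun v => ⟨zeta A v, hex v, fun g hg => huniq v g hg.1 hg.2.1 hg.2.2⟩,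
    fun v f h0 hv hw => key A v f h0 hv hw, ?_⟩
  intro B hB hset
  ext u v
  have hzA := hex v
  have hz0 : cycSum B (zeta A v) = 0 :=
    (Set.ext_iff.mp hset (zeta A v)).mp (zeta_cycle A v)
  obtain ⟨hphiB, hpsiB, -⟩ := key B v (zeta A v) hz0 hzA.2.1 hzA.2.2
  obtain ⟨hphiA, hpsiA, -⟩ := key A v (zeta A v) (zeta_cycle A v) hzA.2.1 hzA.2.2
  by_cases huv : u = v
  · subst huv
    exact zmod2_eq_of_iff _ _ (hpsiA.symm.trans hpsiB)
  · exact zmod2_eq_of_iff _ _ ((hphiA u huv).symm.trans (hphiB u huv))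
end
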